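/- Let ρ : sl(3,ℂ) → End(V) be a representation on a complex vector space V such that ρ(E₁₂), ρ(E₁₃), ρ(E₂₃) act nilpotently, let v ∈ V have weight (λ₁, λ₂), and assume λ₁ + k + 1 ≠ 0, λ₂ + k + 1 ≠ 0 and λ₁ + λ₂ + k + 2 ≠ 0 for all integers k ≥ 1. Then the vector Pv = (P₁₂ ∘ P₁₃ ∘ P₂₃)v given by the three-factor extremal projector satisfies ρ(E₁₂)(Pv) = 0, ρ(E₂₃)(Pv) = 0 and ρ(E₁₃)(Pv) = 0. -/

import Mathlib

open LieAlgebra.SpecialLinear Finset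

attribute [local instance] LieRing.ofAssociativeRing

/-- The elementary matrix `E₁₂` in `sl(3,ℂ)`. -/
noncomputable def sl3E₁₂ : sl (Fin 3) ℂ := single 0 1 (by decide) (1 : ℂ)
/-- The elementary matrix `E₁₃` in `sl(3,ℂ)`. -/
noncomputable def sl3E₁₃ : sl (Fin 3) ℂ := single 0 2 (by decide) (1 : ℂ)
/-- The elementary matrix `E₂₃` in `sl(3,ℂ)`. -/
noncomputable def sl3E₂₃ : sl (Fin 3) ℂ := single 1 2 (by decide) (1 : ℂ)
/-- The elementary matrix `E₂₁` in `sl(3,ℂ)`. -/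
noncomputable def sl3E₂₁ : sl (Fin 3) ℂ := single 1 0 (by decide) (1 : ℂ)
/-- The elementary matrix `E₃₁` in `sl(3,ℂ)`. -/
noncomputable def sl3E₃₁ : sl (Fin 3) ℂ := single 2 0 (by decide) (1 : ℂ)
/-- The elementary matrix `E₃₂` in `sl(3,ℂ)`. -/
noncomputable def sl3E₃₂ : sl (Fin 3) ℂ := single 2 1 (by decide) (1 : ℂ)

/-- The Cartan element `E₁₁ − E₂₂` of `sl(3,ℂ)`. -/
noncomputable def sl3H₁ : sl (Fin 3) ℂ :=
  ⟨Matrix.single 0 0 (1 : ℂ) - Matrix.single 1 1 (1 : ℂ), by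
    change Matrix.traceLinearMap (Fin 3) ℂ ℂ _ = 0
    simp [Matrix.trace_single_eq_same]⟩

/-- The Cartan element `E₂₂ − E₃₃` of `sl(3,ℂ)`. -/
noncomputable def sl3H₂ : sl (Fin 3) ℂ :=
  ⟨Matrix.single 1 1 (1 : ℂ) - Matrix.single 2 2 (1 : ℂ), by
    change Matrix.traceLinearMap (Fin 3) ℂ ℂ _ = 0
    simp [Matrix.trace_single_eq_same]⟩

/-- One factor `Σ_{n=0}^{N} ((−1)^n/(n!·∏_{k=1}^{n} d k)) · lower^n ∘ raise^n` of the
extremal projector. -/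
noncomputable def slProjFactor {V : Type*} [AddCommGroup V] [Module ℂ V]
    (lower raise : Module.End ℂ V) (d : ℕ → ℂ) (N : ℕ) : Module.End ℂ V :=
  ∑ n ∈ Finset.range (N + 1),
    (((-1 : ℂ) ^ n / ((n.factorial : ℂ) * ∏ k ∈ Finset.Icc 1 n, d k)) • (lower ^ n * raise ^ n))

/-- The `sl(3)` extremal projector `P = P₁₂ ∘ P₁₃ ∘ P₂₃` on weight-`(lam₁, lam₂)` vectors,
with each factor truncated at `N` (exact whenever the raising operators are
`(N+1)`-step nilpotent). -/
noncomputable def sl3Projector {V : Type*} [AddCommGroup V] [Module ℂ V]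
    (ρ : sl (Fin 3) ℂ →ₗ⁅ℂ⁆ Module.End ℂ V) (lam₁ lam₂ : ℂ) (N : ℕ) : Module.End ℂ V :=
  slProjFactor (ρ sl3E₂₁) (ρ sl3E₁₂) (fun k => lam₁ + k + 1) N *
    slProjFactor (ρ sl3E₃₁) (ρ sl3E₁₃) (fun k => lam₁ + lam₂ + k + 2) N *
      slProjFactor (ρ sl3E₃₂) (ρ sl3E₂₃) (fun k => lam₂ + k + 1) N

namespace Sl3Aux

noncomputable def pc (d : ℕ → ℂ) (n : ℕ) : ℂ :=
  (-1 : ℂ) ^ n / ((n.factorial : ℂ) * ∏ k ∈ Finset.Icc 1 n, d k)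

lemma pc_zero (d : ℕ → ℂ) : pc d 0 = 1 := by simp [pc]

lemma pc_succ (d : ℕ → ℂ) (n : ℕ) (hd : d (n + 1) ≠ 0) :
    ((n : ℂ) + 1) * d (n + 1) * pc d (n + 1) = - pc d n := by
  have hfac : (((n+1).factorial : ℕ) : ℂ) = ((n:ℂ) + 1) * (n.factorial : ℂ) := by
    rw [Nat.factorial_succ]; push_cast; ring
  rcases eq_or_ne (∏ k ∈ Finset.Icc 1 n, d k) 0 with h | h
  · simp [pc, Finset.prod_Icc_succ_top (by omega : 1 ≤ n + 1), h]
  · have hn1 : ((n:ℂ) + 1) ≠ 0 := by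
      have := Nat.cast_add_one_ne_zero (R := ℂ) n; push_cast at this ⊢; exact this
    have hf : ((n.factorial : ℕ) : ℂ) ≠ 0 := Nat.cast_ne_zero.2 n.factorial_ne_zero
    unfold pc
    rw [Finset.prod_Icc_succ_top (by omega : 1 ≤ n + 1), hfac, pow_succ]
    field_simp

variable {V : Type*} [AddCommGroup V] [Module ℂ V]

lemma proj_apply (L R : Module.End ℂ V) (d : ℕ → ℂ) (N : ℕ) (w : V) :
    slProjFactor L R d N w = ∑ n ∈ Finset.range (N + 1), pc d n • (L ^ n) ((R ^ n) w) := by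
  simp [slProjFactor, pc, LinearMap.sum_apply, LinearMap.smul_apply, Module.End.mul_apply]

lemma wt_pow (H X : Module.End ℂ V) (c : ℂ)
    (hX : ∀ u, H (X u) = X (H u) + c • X u) :
    ∀ (n : ℕ) (ν : ℂ) (u : V), H u = ν • u → H ((X ^ n) u) = (ν + n * c) • (X ^ n) u := by
  intro n
  induction n with
  | zero => intro ν u hu; simpa using hu
  | succ n ih =>
    intro ν u hu
    have h1 : (X ^ (n+1)) u = (X ^ n) (X u) := by rw [pow_succ, Module.End.mul_apply]
    have h2 : H (X u) = (ν + c) • X u := by rw [hX, hu, map_smul]; module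
    rw [h1, ih (ν + c) (X u) h2]
    congr 1
    push_cast; ring

lemma wt_proj (H E F : Module.End ℂ V) (cE cF : ℂ) (hc : cE + cF = 0)
    (hE : ∀ u, H (E u) = E (H u) + cE • E u)
    (hF : ∀ u, H (F u) = F (H u) + cF • F u)
    (d : ℕ → ℂ) (N : ℕ) (w : V) (μ : ℂ) (hw : H w = μ • w) :
    H (slProjFactor F E d N w) = μ • slProjFactor F E d N w := by
  rw [proj_apply, map_sum, Finset.smul_sum]
  refine Finset.sum_congr rfl fun n _ => ?_
  rw [map_smul, wt_pow H F cF hF n (μ + n * cE) ((E ^ n) w) (wt_pow H E cE hE n μ w hw),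
    smul_smul, smul_smul]
  congr 1
  linear_combination (pc d n) * (n : ℂ) * hc

lemma comm_pow (A B : Module.End ℂ V) (h : ∀ u, A (B u) = B (A u)) :
    ∀ (n : ℕ) (u : V), A ((B ^ n) u) = (B ^ n) (A u) := by
  intro n
  induction n with
  | zero => intro u; simp
  | succ n ih =>
    intro u
    rw [pow_succ, Module.End.mul_apply, Module.End.mul_apply, ih (B u), h]

lemma push_pow (A B C : Module.End ℂ V)
    (h : ∀ u, A (B u) = B (A u) + C u)
    (hC : ∀ u, C (B u) = B (C u)) :
    ∀ (n : ℕ) (u : V),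
      A ((B ^ (n + 1)) u) = (B ^ (n + 1)) (A u) + ((n : ℂ) + 1) • (B ^ n) (C u) := by
  intro n
  induction n with
  | zero => intro u; simpa using h u
  | succ n ih =>
    intro u
    have h1 : (B ^ (n+2)) u = (B ^ (n+1)) (B u) := by rw [pow_succ, Module.End.mul_apply]
    have h2 : (B ^ (n+1)) (B u) = (B ^ (n+2)) u := h1.symm
    rw [h1, ih (B u), h u, map_add, hC u]
    have h3 : (B ^ n) (B (C u)) = (B ^ (n+1)) (C u) := by rw [pow_succ, Module.End.mul_apply]
    have h4 : (B ^ (n+1)) (B (A u)) = (B ^ (n+1+1)) (A u) := by rw [pow_succ B (n+1), Module.End.mul_apply]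
    rw [h3, h4]
    push_cast
    module

lemma raise_pow_lower (E F H : Module.End ℂ V)
    (hEF : ∀ u, E (F u) = F (E u) + H u)
    (hHF : ∀ u, H (F u) = F (H u) + (-2 : ℂ) • F u) :
    ∀ (n : ℕ) (ν : ℂ) (u : V), H u = ν • u →
      E ((F ^ (n + 1)) u) = (F ^ (n + 1)) (E u) + (((n : ℂ) + 1) * (ν - n)) • (F ^ n) u := by
  intro n
  induction n with
  | zero =>
    intro ν u hu
    simpa [hu] using hEF u
  | succ n ih =>
    intro ν u hu
    have hFu : H (F u) = (ν - 2) • F u := by rw [hHF, hu, map_smul]; module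
    have h1 : (F ^ (n+2)) u = (F ^ (n+1)) (F u) := by rw [pow_succ F (n+1), Module.End.mul_apply]
    have h2 : (F ^ n) (F u) = (F ^ (n+1)) u := by rw [pow_succ F n, Module.End.mul_apply]
    have h3 : (F ^ (n+1)) (F (E u)) = (F ^ (n+2)) (E u) := by
      rw [pow_succ F (n+1), Module.End.mul_apply]
    rw [h1, ih (ν - 2) (F u) hFu, hEF u, hu, map_add, map_smul, h2, h3]
    push_cast
    module

lemma raise_pow_F (E F H : Module.End ℂ V)
    (hEF : ∀ u, E (F u) = F (E u) + H u)
    (hHE : ∀ u, H (E u) = E (H u) + (2 : ℂ) • E u) :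
    ∀ (n : ℕ) (ν : ℂ) (u : V), H u = ν • u →
      (E ^ (n + 1)) (F u) = F ((E ^ (n + 1)) u) + (((n : ℂ) + 1) * (ν + n)) • (E ^ n) u := by
  intro n
  induction n with
  | zero =>
    intro ν u hu
    simpa [hu] using hEF u
  | succ n ih =>
    intro ν u hu
    have h1 : (E ^ (n+2)) (F u) = E ((E ^ (n+1)) (F u)) := by
      rw [pow_succ' E (n+1), Module.End.mul_apply]
    have h2 : E ((E ^ (n+1)) u) = (E ^ (n+2)) u := by
      rw [pow_succ' E (n+1), Module.End.mul_apply]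
    have h3 : E ((E ^ n) u) = (E ^ (n+1)) u := by
      rw [pow_succ' E n, Module.End.mul_apply]
    have hwt : H ((E ^ (n+1)) u) = (ν + ((n:ℕ)+1 : ℕ) * 2) • (E ^ (n+1)) u :=
      wt_pow H E 2 hHE (n+1) ν u hu
    rw [h1, ih ν u hu, map_add, map_smul, h3, hEF ((E ^ (n+1)) u), h2, hwt]
    push_cast
    module

lemma proj_succ (L R : Module.End ℂ V) (d : ℕ → ℂ) (N : ℕ) (w : V) :
    slProjFactor L R d (N + 1) w
      = slProjFactor L R d N w + pc d (N + 1) • (L ^ (N + 1)) ((R ^ (N + 1)) w) := by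
  rw [proj_apply, proj_apply, Finset.sum_range_succ]

lemma factor_raise (E F H : Module.End ℂ V)
    (hEF : ∀ u, E (F u) = F (E u) + H u)
    (hHE : ∀ u, H (E u) = E (H u) + (2 : ℂ) • E u)
    (hHF : ∀ u, H (F u) = F (H u) + (-2 : ℂ) • F u)
    (μ s : ℂ) (d : ℕ → ℂ)
    (hdd : ∀ k : ℕ, 1 ≤ k → d k = μ + k + 1 + s)
    (w : V) (hw : H w = μ • w) :
    ∀ N : ℕ, (∀ k : ℕ, 1 ≤ k → k ≤ N → d k ≠ 0) →
      E (slProjFactor F E d N w) =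
        pc d N • (F ^ N) ((E ^ (N + 1)) w) +
          ∑ m ∈ Finset.range N, (pc d m * s / (μ + m + 2 + s)) • (F ^ m) ((E ^ (m + 1)) w) := by
  intro N
  induction N with
  | zero =>
    intro _
    simp [proj_apply, pc_zero]
  | succ N ih =>
    intro hd0
    have hdN : d (N + 1) ≠ 0 := hd0 (N + 1) (by omega) (by omega)
    have hdNv : d (N + 1) = μ + N + 2 + s := by
      rw [hdd (N + 1) (by omega)]; push_cast; ring
    have hwt : H ((E ^ (N + 1)) w) = (μ + ((N : ℕ) + 1 : ℕ) * 2) • (E ^ (N + 1)) w :=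
      wt_pow H E 2 hHE (N + 1) μ w hw
    have hstep := raise_pow_lower E F H hEF hHF N (μ + ((N : ℕ) + 1 : ℕ) * 2)
      ((E ^ (N + 1)) w) hwt
    have hE2 : E ((E ^ (N + 1)) w) = (E ^ (N + 2)) w := by
      rw [pow_succ' E (N + 1), Module.End.mul_apply]
    rw [proj_succ, map_add, map_smul, ih (fun k h1 h2 => hd0 k h1 (by omega)), hstep, hE2,
      Finset.sum_range_succ]
    have hc := pc_succ d N hdN
    rw [hdNv] at hc
    have hne : μ + (N : ℂ) + 2 + s ≠ 0 := by rw [← hdNv]; exact hdN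
    have hkey : pc d N + (((N:ℂ)+1) * (μ + ((N:ℕ)+1:ℕ) * 2 - (N:ℂ))) * pc d (N+1)
        = pc d N * s / (μ + (N:ℂ) + 2 + s) := by
      rw [eq_div_iff hne]
      push_cast
      linear_combination (μ + (N:ℂ) + 2) * hc
    push_cast at hkey ⊢
    set pN := pc d N with hpN
    set pN1 := pc d (N+1) with hpN1
    clear_value pN pN1
    have hne2 : (2 + (N:ℂ) + μ + s) ≠ 0 := by
      rw [show (2 + (N:ℂ) + μ + s) = μ + (N:ℂ) + 2 + s by ring]; exact hne
    match_scalars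
    all_goals try ring
    all_goals rw [← div_eq_mul_inv, eq_div_iff hne2]
    all_goals linear_combination (μ + (N:ℂ) + 2) * hc

lemma factor_kill (E F H : Module.End ℂ V)
    (hEF : ∀ u, E (F u) = F (E u) + H u)
    (hHE : ∀ u, H (E u) = E (H u) + (2 : ℂ) • E u)
    (hHF : ∀ u, H (F u) = F (H u) + (-2 : ℂ) • F u)
    (μ : ℂ) (d : ℕ → ℂ) (N : ℕ)
    (hdd : ∀ k : ℕ, 1 ≤ k → d k = μ + k + 1)
    (hd0 : ∀ k : ℕ, 1 ≤ k → k ≤ N → d k ≠ 0)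
    (hE : E ^ (N + 1) = 0)
    (w : V) (hw : H w = μ • w) :
    E (slProjFactor F E d N w) = 0 := by
  have hdd' : ∀ k : ℕ, 1 ≤ k → d k = μ + k + 1 + 0 := by
    intro k hk; rw [hdd k hk]; ring
  rw [factor_raise E F H hEF hHE hHF μ 0 d hdd' w hw N hd0, hE]
  simp

lemma tail_cancel (E F H : Module.End ℂ V)
    (hEF : ∀ u, E (F u) = F (E u) + H u)
    (hHE : ∀ u, H (E u) = E (H u) + (2 : ℂ) • E u)
    (μ : ℂ) (d : ℕ → ℂ)
    (hdd : ∀ k : ℕ, 1 ≤ k → d k = μ + k + 1)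
    (y : V) (hy : H y = (μ + 1) • y) :
    ∀ N : ℕ, (∀ k : ℕ, 1 ≤ k → k ≤ N → d k ≠ 0) →
      (∑ n ∈ Finset.range (N + 1), pc d n • (F ^ n) ((E ^ n) (F y)))
        + ∑ m ∈ Finset.range N, ((((m : ℂ) + 1) * pc d (m + 1)) • (F ^ (m + 1)) ((E ^ m) y))
      = pc d N • (F ^ (N + 1)) ((E ^ N) y) := by
  intro N
  induction N with
  | zero =>
    intro _
    simp [pc_zero, pow_one]
  | succ N ih =>
    intro hd0
    have hdN : d (N + 1) ≠ 0 := hd0 (N + 1) (by omega) (by omega)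
    have hdNv : d (N + 1) = μ + N + 2 := by rw [hdd (N + 1) (by omega)]; push_cast; ring
    have hc := pc_succ d N hdN
    rw [hdNv] at hc
    have hstep := raise_pow_F E F H hEF hHE N (μ + 1) y hy
    have h1 : (F ^ (N + 1)) (F ((E ^ (N + 1)) y)) = (F ^ (N + 2)) ((E ^ (N + 1)) y) := by
      rw [pow_succ F (N + 1), Module.End.mul_apply]
    have e1 := Finset.sum_range_succ (fun n => pc d n • (F ^ n) ((E ^ n) (F y))) (N + 1)
    have e2 := Finset.sum_range_succ
      (fun m => (((m : ℂ) + 1) * pc d (m + 1)) • (F ^ (m + 1)) ((E ^ m) y)) N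
    have hih := ih (fun k a b => hd0 k a (by omega))
    rw [e1, e2, hstep, map_add, map_smul, h1]
    linear_combination (norm := module) hih + hc • ((F ^ (N + 1)) ((E ^ N) y))

lemma pushA (A B Fp C : Module.End ℂ V)
    (hABC : ∀ u, A (B u) = B (A u) + C u)
    (hCB : ∀ u, C (B u) = B (C u))
    (hAF : ∀ u, A (Fp u) = Fp (A u))
    (d : ℕ → ℂ) (x : V) :
    ∀ N : ℕ,
      A (slProjFactor Fp B d N x)
        = (∑ n ∈ Finset.range (N + 1), pc d n • (Fp ^ n) ((B ^ n) (A x)))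
          + ∑ m ∈ Finset.range N, ((((m : ℂ) + 1) * pc d (m + 1)) • (Fp ^ (m + 1)) ((B ^ m) (C x))) := by
  intro N
  induction N with
  | zero => simp [proj_apply, pc_zero]
  | succ N ih =>
    have e1 := Finset.sum_range_succ (fun n => pc d n • (Fp ^ n) ((B ^ n) (A x))) (N + 1)
    have e2 := Finset.sum_range_succ
      (fun m => (((m : ℂ) + 1) * pc d (m + 1)) • (Fp ^ (m + 1)) ((B ^ m) (C x))) N
    rw [proj_succ, map_add, map_smul, ih, comm_pow A Fp hAF (N + 1) ((B ^ (N + 1)) x),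
      push_pow A B C hABC hCB N x, e1, e2, map_add, map_smul]
    module

lemma pushB (A Fp B C : Module.End ℂ V)
    (hAF : ∀ u, A (Fp u) = Fp (A u) + C u)
    (hCF : ∀ u, C (Fp u) = Fp (C u))
    (hAB : ∀ u, A (B u) = B (A u))
    (d : ℕ → ℂ) (w : V) (hw : A w = 0) :
    ∀ N : ℕ,
      A (slProjFactor Fp B d N w)
        = ∑ m ∈ Finset.range N, ((((m : ℂ) + 1) * pc d (m + 1)) • (Fp ^ m) (C ((B ^ (m + 1)) w))) := by
  intro N
  induction N with
  | zero => simp [proj_apply, pc_zero, hw]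
  | succ N ih =>
    have h0 : A ((B ^ (N + 1)) w) = 0 := by
      rw [comm_pow A B hAB (N + 1) w, hw, map_zero]
    have h1 : A ((Fp ^ (N + 1)) ((B ^ (N + 1)) w))
        = ((N : ℂ) + 1) • (Fp ^ N) (C ((B ^ (N + 1)) w)) := by
      rw [push_pow A Fp C hAF hCF N ((B ^ (N + 1)) w), h0, map_zero, zero_add]
    have e2 := Finset.sum_range_succ
      (fun m => (((m : ℂ) + 1) * pc d (m + 1)) • (Fp ^ m) (C ((B ^ (m + 1)) w))) N
    rw [proj_succ, map_add, map_smul, ih, h1, e2]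
    module


lemma g1 : ⁅sl3H₁, sl3E₁₂⁆ = (2:ℂ) • sl3E₁₂ := by
  apply Subtype.ext
  show ⁅(sl3H₁ : Matrix (Fin 3) (Fin 3) ℂ), (sl3E₁₂ : Matrix (Fin 3) (Fin 3) ℂ)⁆ = (2:ℂ) • (sl3E₁₂ : Matrix (Fin 3) (Fin 3) ℂ)
  rw [Ring.lie_def]
  ext i j
  fin_cases i <;> fin_cases j <;>
    norm_num [sl3E₁₂, sl3E₁₃, sl3E₂₃, sl3E₂₁, sl3E₃₁, sl3E₃₂, sl3H₁, sl3H₂, Matrix.single, Matrix.mul_apply, Fin.sum_univ_three, Fin.ext_iff]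

lemma g2 : ⁅sl3H₁, sl3E₂₁⁆ = (-2:ℂ) • sl3E₂₁ := by
  apply Subtype.ext
  show ⁅(sl3H₁ : Matrix (Fin 3) (Fin 3) ℂ), (sl3E₂₁ : Matrix (Fin 3) (Fin 3) ℂ)⁆ = (-2:ℂ) • (sl3E₂₁ : Matrix (Fin 3) (Fin 3) ℂ)
  rw [Ring.lie_def]
  ext i j
  fin_cases i <;> fin_cases j <;>
    norm_num [sl3E₁₂, sl3E₁₃, sl3E₂₃, sl3E₂₁, sl3E₃₁, sl3E₃₂, sl3H₁, sl3H₂, Matrix.single, Matrix.mul_apply, Fin.sum_univ_three, Fin.ext_iff]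

lemma g3 : ⁅sl3E₁₂, sl3E₂₁⁆ = sl3H₁ := by
  apply Subtype.ext
  show ⁅(sl3E₁₂ : Matrix (Fin 3) (Fin 3) ℂ), (sl3E₂₁ : Matrix (Fin 3) (Fin 3) ℂ)⁆ = (sl3H₁ : Matrix (Fin 3) (Fin 3) ℂ)
  rw [Ring.lie_def]
  ext i j
  fin_cases i <;> fin_cases j <;>
    norm_num [sl3E₁₂, sl3E₁₃, sl3E₂₃, sl3E₂₁, sl3E₃₁, sl3E₃₂, sl3H₁, sl3H₂, Matrix.single, Matrix.mul_apply, Fin.sum_univ_three, Fin.ext_iff]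

lemma g4 : ⁅sl3H₂, sl3E₂₃⁆ = (2:ℂ) • sl3E₂₃ := by
  apply Subtype.ext
  show ⁅(sl3H₂ : Matrix (Fin 3) (Fin 3) ℂ), (sl3E₂₃ : Matrix (Fin 3) (Fin 3) ℂ)⁆ = (2:ℂ) • (sl3E₂₃ : Matrix (Fin 3) (Fin 3) ℂ)
  rw [Ring.lie_def]
  ext i j
  fin_cases i <;> fin_cases j <;>
    norm_num [sl3E₁₂, sl3E₁₃, sl3E₂₃, sl3E₂₁, sl3E₃₁, sl3E₃₂, sl3H₁, sl3H₂, Matrix.single, Matrix.mul_apply, Fin.sum_univ_three, Fin.ext_iff]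

lemma g5 : ⁅sl3H₂, sl3E₃₂⁆ = (-2:ℂ) • sl3E₃₂ := by
  apply Subtype.ext
  show ⁅(sl3H₂ : Matrix (Fin 3) (Fin 3) ℂ), (sl3E₃₂ : Matrix (Fin 3) (Fin 3) ℂ)⁆ = (-2:ℂ) • (sl3E₃₂ : Matrix (Fin 3) (Fin 3) ℂ)
  rw [Ring.lie_def]
  ext i j
  fin_cases i <;> fin_cases j <;>
    norm_num [sl3E₁₂, sl3E₁₃, sl3E₂₃, sl3E₂₁, sl3E₃₁, sl3E₃₂, sl3H₁, sl3H₂, Matrix.single, Matrix.mul_apply, Fin.sum_univ_three, Fin.ext_iff]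

lemma g6 : ⁅sl3E₂₃, sl3E₃₂⁆ = sl3H₂ := by
  apply Subtype.ext
  show ⁅(sl3E₂₃ : Matrix (Fin 3) (Fin 3) ℂ), (sl3E₃₂ : Matrix (Fin 3) (Fin 3) ℂ)⁆ = (sl3H₂ : Matrix (Fin 3) (Fin 3) ℂ)
  rw [Ring.lie_def]
  ext i j
  fin_cases i <;> fin_cases j <;>
    norm_num [sl3E₁₂, sl3E₁₃, sl3E₂₃, sl3E₂₁, sl3E₃₁, sl3E₃₂, sl3H₁, sl3H₂, Matrix.single, Matrix.mul_apply, Fin.sum_univ_three, Fin.ext_iff]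

lemma g7 : ⁅sl3E₁₃, sl3E₃₁⁆ = sl3H₁ + sl3H₂ := by
  apply Subtype.ext
  show ⁅(sl3E₁₃ : Matrix (Fin 3) (Fin 3) ℂ), (sl3E₃₁ : Matrix (Fin 3) (Fin 3) ℂ)⁆ = (sl3H₁ : Matrix (Fin 3) (Fin 3) ℂ) + (sl3H₂ : Matrix (Fin 3) (Fin 3) ℂ)
  rw [Ring.lie_def]
  ext i j
  fin_cases i <;> fin_cases j <;>
    norm_num [sl3E₁₂, sl3E₁₃, sl3E₂₃, sl3E₂₁, sl3E₃₁, sl3E₃₂, sl3H₁, sl3H₂, Matrix.single, Matrix.mul_apply, Fin.sum_univ_three, Fin.ext_iff]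

lemma g8 : ⁅sl3H₁, sl3E₁₃⁆ = (1:ℂ) • sl3E₁₃ := by
  apply Subtype.ext
  show ⁅(sl3H₁ : Matrix (Fin 3) (Fin 3) ℂ), (sl3E₁₃ : Matrix (Fin 3) (Fin 3) ℂ)⁆ = (1:ℂ) • (sl3E₁₃ : Matrix (Fin 3) (Fin 3) ℂ)
  rw [Ring.lie_def]
  ext i j
  fin_cases i <;> fin_cases j <;>
    norm_num [sl3E₁₂, sl3E₁₃, sl3E₂₃, sl3E₂₁, sl3E₃₁, sl3E₃₂, sl3H₁, sl3H₂, Matrix.single, Matrix.mul_apply, Fin.sum_univ_three, Fin.ext_iff]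

lemma g9 : ⁅sl3H₂, sl3E₁₃⁆ = (1:ℂ) • sl3E₁₃ := by
  apply Subtype.ext
  show ⁅(sl3H₂ : Matrix (Fin 3) (Fin 3) ℂ), (sl3E₁₃ : Matrix (Fin 3) (Fin 3) ℂ)⁆ = (1:ℂ) • (sl3E₁₃ : Matrix (Fin 3) (Fin 3) ℂ)
  rw [Ring.lie_def]
  ext i j
  fin_cases i <;> fin_cases j <;>
    norm_num [sl3E₁₂, sl3E₁₃, sl3E₂₃, sl3E₂₁, sl3E₃₁, sl3E₃₂, sl3H₁, sl3H₂, Matrix.single, Matrix.mul_apply, Fin.sum_univ_three, Fin.ext_iff]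

lemma g10 : ⁅sl3H₁, sl3E₃₁⁆ = (-1:ℂ) • sl3E₃₁ := by
  apply Subtype.ext
  show ⁅(sl3H₁ : Matrix (Fin 3) (Fin 3) ℂ), (sl3E₃₁ : Matrix (Fin 3) (Fin 3) ℂ)⁆ = (-1:ℂ) • (sl3E₃₁ : Matrix (Fin 3) (Fin 3) ℂ)
  rw [Ring.lie_def]
  ext i j
  fin_cases i <;> fin_cases j <;>
    norm_num [sl3E₁₂, sl3E₁₃, sl3E₂₃, sl3E₂₁, sl3E₃₁, sl3E₃₂, sl3H₁, sl3H₂, Matrix.single, Matrix.mul_apply, Fin.sum_univ_three, Fin.ext_iff]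

lemma g11 : ⁅sl3H₂, sl3E₃₁⁆ = (-1:ℂ) • sl3E₃₁ := by
  apply Subtype.ext
  show ⁅(sl3H₂ : Matrix (Fin 3) (Fin 3) ℂ), (sl3E₃₁ : Matrix (Fin 3) (Fin 3) ℂ)⁆ = (-1:ℂ) • (sl3E₃₁ : Matrix (Fin 3) (Fin 3) ℂ)
  rw [Ring.lie_def]
  ext i j
  fin_cases i <;> fin_cases j <;>
    norm_num [sl3E₁₂, sl3E₁₃, sl3E₂₃, sl3E₂₁, sl3E₃₁, sl3E₃₂, sl3H₁, sl3H₂, Matrix.single, Matrix.mul_apply, Fin.sum_univ_three, Fin.ext_iff]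

lemma g12 : ⁅sl3H₁, sl3E₂₃⁆ = (-1:ℂ) • sl3E₂₃ := by
  apply Subtype.ext
  show ⁅(sl3H₁ : Matrix (Fin 3) (Fin 3) ℂ), (sl3E₂₃ : Matrix (Fin 3) (Fin 3) ℂ)⁆ = (-1:ℂ) • (sl3E₂₃ : Matrix (Fin 3) (Fin 3) ℂ)
  rw [Ring.lie_def]
  ext i j
  fin_cases i <;> fin_cases j <;>
    norm_num [sl3E₁₂, sl3E₁₃, sl3E₂₃, sl3E₂₁, sl3E₃₁, sl3E₃₂, sl3H₁, sl3H₂, Matrix.single, Matrix.mul_apply, Fin.sum_univ_three, Fin.ext_iff]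

lemma g13 : ⁅sl3H₁, sl3E₃₂⁆ = (1:ℂ) • sl3E₃₂ := by
  apply Subtype.ext
  show ⁅(sl3H₁ : Matrix (Fin 3) (Fin 3) ℂ), (sl3E₃₂ : Matrix (Fin 3) (Fin 3) ℂ)⁆ = (1:ℂ) • (sl3E₃₂ : Matrix (Fin 3) (Fin 3) ℂ)
  rw [Ring.lie_def]
  ext i j
  fin_cases i <;> fin_cases j <;>
    norm_num [sl3E₁₂, sl3E₁₃, sl3E₂₃, sl3E₂₁, sl3E₃₁, sl3E₃₂, sl3H₁, sl3H₂, Matrix.single, Matrix.mul_apply, Fin.sum_univ_three, Fin.ext_iff]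

lemma g14 : ⁅sl3E₂₃, sl3E₁₂⁆ = -sl3E₁₃ := by
  apply Subtype.ext
  show ⁅(sl3E₂₃ : Matrix (Fin 3) (Fin 3) ℂ), (sl3E₁₂ : Matrix (Fin 3) (Fin 3) ℂ)⁆ = -(sl3E₁₃ : Matrix (Fin 3) (Fin 3) ℂ)
  rw [Ring.lie_def]
  ext i j
  fin_cases i <;> fin_cases j <;>
    norm_num [sl3E₁₂, sl3E₁₃, sl3E₂₃, sl3E₂₁, sl3E₃₁, sl3E₃₂, sl3H₁, sl3H₂, Matrix.single, Matrix.mul_apply, Fin.sum_univ_three, Fin.ext_iff]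

lemma g15 : ⁅sl3E₂₃, sl3E₁₃⁆ = 0 := by
  apply Subtype.ext
  show ⁅(sl3E₂₃ : Matrix (Fin 3) (Fin 3) ℂ), (sl3E₁₃ : Matrix (Fin 3) (Fin 3) ℂ)⁆ = (0 : Matrix (Fin 3) (Fin 3) ℂ)
  rw [Ring.lie_def]
  ext i j
  fin_cases i <;> fin_cases j <;>
    norm_num [sl3E₁₂, sl3E₁₃, sl3E₂₃, sl3E₂₁, sl3E₃₁, sl3E₃₂, sl3H₁, sl3H₂, Matrix.single, Matrix.mul_apply, Fin.sum_univ_three, Fin.ext_iff]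

lemma g16 : ⁅sl3E₂₃, sl3E₂₁⁆ = 0 := by
  apply Subtype.ext
  show ⁅(sl3E₂₃ : Matrix (Fin 3) (Fin 3) ℂ), (sl3E₂₁ : Matrix (Fin 3) (Fin 3) ℂ)⁆ = (0 : Matrix (Fin 3) (Fin 3) ℂ)
  rw [Ring.lie_def]
  ext i j
  fin_cases i <;> fin_cases j <;>
    norm_num [sl3E₁₂, sl3E₁₃, sl3E₂₃, sl3E₂₁, sl3E₃₁, sl3E₃₂, sl3H₁, sl3H₂, Matrix.single, Matrix.mul_apply, Fin.sum_univ_three, Fin.ext_iff]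

lemma g17 : ⁅sl3E₂₃, sl3E₃₁⁆ = sl3E₂₁ := by
  apply Subtype.ext
  show ⁅(sl3E₂₃ : Matrix (Fin 3) (Fin 3) ℂ), (sl3E₃₁ : Matrix (Fin 3) (Fin 3) ℂ)⁆ = (sl3E₂₁ : Matrix (Fin 3) (Fin 3) ℂ)
  rw [Ring.lie_def]
  ext i j
  fin_cases i <;> fin_cases j <;>
    norm_num [sl3E₁₂, sl3E₁₃, sl3E₂₃, sl3E₂₁, sl3E₃₁, sl3E₃₂, sl3H₁, sl3H₂, Matrix.single, Matrix.mul_apply, Fin.sum_univ_three, Fin.ext_iff]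

lemma g18 : ⁅sl3E₂₁, sl3E₃₁⁆ = 0 := by
  apply Subtype.ext
  show ⁅(sl3E₂₁ : Matrix (Fin 3) (Fin 3) ℂ), (sl3E₃₁ : Matrix (Fin 3) (Fin 3) ℂ)⁆ = (0 : Matrix (Fin 3) (Fin 3) ℂ)
  rw [Ring.lie_def]
  ext i j
  fin_cases i <;> fin_cases j <;>
    norm_num [sl3E₁₂, sl3E₁₃, sl3E₂₃, sl3E₂₁, sl3E₃₁, sl3E₃₂, sl3H₁, sl3H₂, Matrix.single, Matrix.mul_apply, Fin.sum_univ_three, Fin.ext_iff]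

lemma g19 : ⁅sl3E₁₂, sl3E₁₃⁆ = 0 := by
  apply Subtype.ext
  show ⁅(sl3E₁₂ : Matrix (Fin 3) (Fin 3) ℂ), (sl3E₁₃ : Matrix (Fin 3) (Fin 3) ℂ)⁆ = (0 : Matrix (Fin 3) (Fin 3) ℂ)
  rw [Ring.lie_def]
  ext i j
  fin_cases i <;> fin_cases j <;>
    norm_num [sl3E₁₂, sl3E₁₃, sl3E₂₃, sl3E₂₁, sl3E₃₁, sl3E₃₂, sl3H₁, sl3H₂, Matrix.single, Matrix.mul_apply, Fin.sum_univ_three, Fin.ext_iff]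

lemma g20 : ⁅sl3E₁₂, sl3E₂₃⁆ = sl3E₁₃ := by
  apply Subtype.ext
  show ⁅(sl3E₁₂ : Matrix (Fin 3) (Fin 3) ℂ), (sl3E₂₃ : Matrix (Fin 3) (Fin 3) ℂ)⁆ = (sl3E₁₃ : Matrix (Fin 3) (Fin 3) ℂ)
  rw [Ring.lie_def]
  ext i j
  fin_cases i <;> fin_cases j <;>
    norm_num [sl3E₁₂, sl3E₁₃, sl3E₂₃, sl3E₂₁, sl3E₃₁, sl3E₃₂, sl3H₁, sl3H₂, Matrix.single, Matrix.mul_apply, Fin.sum_univ_three, Fin.ext_iff]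


variable {V : Type*} [AddCommGroup V] [Module ℂ V]

lemma brk_end (ρ : sl (Fin 3) ℂ →ₗ⁅ℂ⁆ Module.End ℂ V) {a b c : sl (Fin 3) ℂ}
    (h : ⁅a, b⁆ = c) (u : V) : ρ a (ρ b u) = ρ b (ρ a u) + ρ c u := by
  have h2 : ρ a * ρ b - ρ b * ρ a = ρ c := by
    rw [← Ring.lie_def, ← LieHom.map_lie, h]
  have h3 := LinearMap.congr_fun h2 u
  simp only [LinearMap.sub_apply, Module.End.mul_apply] at h3
  exact sub_eq_iff_eq_add'.mp h3

lemma brk_comm (ρ : sl (Fin 3) ℂ →ₗ⁅ℂ⁆ Module.End ℂ V) {a b : sl (Fin 3) ℂ}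
    (h : ⁅a, b⁆ = 0) (u : V) : ρ a (ρ b u) = ρ b (ρ a u) := by
  have := brk_end ρ h u
  simpa using this

lemma brk_smul (ρ : sl (Fin 3) ℂ →ₗ⁅ℂ⁆ Module.End ℂ V) {a b e : sl (Fin 3) ℂ} {c : ℂ}
    (h : ⁅a, b⁆ = c • e) (u : V) : ρ a (ρ b u) = ρ b (ρ a u) + c • ρ e u := by
  have := brk_end ρ h u
  simpa [map_smul] using this

end Sl3Aux

open Sl3Aux in
/-- The `sl(3,ℂ)` extremal projector sends every weight-`(lam₁,lam₂)` vector (on which the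
raising operators act nilpotently) to a highest weight vector:
`ρ(E₁₂)(Pv) = 0`, `ρ(E₂₃)(Pv) = 0` and `ρ(E₁₃)(Pv) = 0`. -/
theorem sl3_extremal_projector_highest_weight
    {V : Type*} [AddCommGroup V] [Module ℂ V]
    (ρ : sl (Fin 3) ℂ →ₗ⁅ℂ⁆ Module.End ℂ V)
    (lam₁ lam₂ : ℂ)
    (hd₁ : ∀ k : ℕ, 1 ≤ k → lam₁ + k + 1 ≠ 0)
    (hd₂ : ∀ k : ℕ, 1 ≤ k → lam₂ + k + 1 ≠ 0)
    (hd₃ : ∀ k : ℕ, 1 ≤ k → lam₁ + lam₂ + k + 2 ≠ 0)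
    (N : ℕ)
    (h12 : (ρ sl3E₁₂) ^ (N + 1) = 0)
    (h13 : (ρ sl3E₁₃) ^ (N + 1) = 0)
    (h23 : (ρ sl3E₂₃) ^ (N + 1) = 0)
    (v : V)
    (hw₁ : (ρ sl3H₁) v = lam₁ • v)
    (hw₂ : (ρ sl3H₂) v = lam₂ • v) :
    (ρ sl3E₁₂) (sl3Projector ρ lam₁ lam₂ N v) = 0 ∧
    (ρ sl3E₂₃) (sl3Projector ρ lam₁ lam₂ N v) = 0 ∧
    (ρ sl3E₁₃) (sl3Projector ρ lam₁ lam₂ N v) = 0 := by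
  have hN1 : ((N : ℂ) + 1) ≠ 0 := by
    have := Nat.cast_add_one_ne_zero (R := ℂ) N
    push_cast at this ⊢
    exact this
  have hEF₂ : ∀ u, ρ sl3E₂₃ (ρ sl3E₃₂ u) = ρ sl3E₃₂ (ρ sl3E₂₃ u) + ρ sl3H₂ u := brk_end ρ g6
  have hHE₂ : ∀ u, ρ sl3H₂ (ρ sl3E₂₃ u) = ρ sl3E₂₃ (ρ sl3H₂ u) + (2:ℂ) • ρ sl3E₂₃ u :=
    brk_smul ρ g4
  have hHF₂ : ∀ u, ρ sl3H₂ (ρ sl3E₃₂ u) = ρ sl3E₃₂ (ρ sl3H₂ u) + (-2:ℂ) • ρ sl3E₃₂ u :=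
    brk_smul ρ g5
  have hEF₁ : ∀ u, ρ sl3E₁₂ (ρ sl3E₂₁ u) = ρ sl3E₂₁ (ρ sl3E₁₂ u) + ρ sl3H₁ u := brk_end ρ g3
  have hHE₁ : ∀ u, ρ sl3H₁ (ρ sl3E₁₂ u) = ρ sl3E₁₂ (ρ sl3H₁ u) + (2:ℂ) • ρ sl3E₁₂ u :=
    brk_smul ρ g1
  have hHF₁ : ∀ u, ρ sl3H₁ (ρ sl3E₂₁ u) = ρ sl3E₂₁ (ρ sl3H₁ u) + (-2:ℂ) • ρ sl3E₂₁ u :=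
    brk_smul ρ g2
  have h1e2 : ∀ u, ρ sl3H₁ (ρ sl3E₂₃ u) = ρ sl3E₂₃ (ρ sl3H₁ u) + (-1:ℂ) • ρ sl3E₂₃ u :=
    brk_smul ρ g12
  have h1f2 : ∀ u, ρ sl3H₁ (ρ sl3E₃₂ u) = ρ sl3E₃₂ (ρ sl3H₁ u) + (1:ℂ) • ρ sl3E₃₂ u :=
    brk_smul ρ g13
  have h1e3 : ∀ u, ρ sl3H₁ (ρ sl3E₁₃ u) = ρ sl3E₁₃ (ρ sl3H₁ u) + (1:ℂ) • ρ sl3E₁₃ u :=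
    brk_smul ρ g8
  have h2e3 : ∀ u, ρ sl3H₂ (ρ sl3E₁₃ u) = ρ sl3E₁₃ (ρ sl3H₂ u) + (1:ℂ) • ρ sl3E₁₃ u :=
    brk_smul ρ g9
  have h1f3 : ∀ u, ρ sl3H₁ (ρ sl3E₃₁ u) = ρ sl3E₃₁ (ρ sl3H₁ u) + (-1:ℂ) • ρ sl3E₃₁ u :=
    brk_smul ρ g10
  have h2f3 : ∀ u, ρ sl3H₂ (ρ sl3E₃₁ u) = ρ sl3E₃₁ (ρ sl3H₂ u) + (-1:ℂ) • ρ sl3E₃₁ u :=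
    brk_smul ρ g11
  have ce2e3 : ∀ u, ρ sl3E₂₃ (ρ sl3E₁₃ u) = ρ sl3E₁₃ (ρ sl3E₂₃ u) := brk_comm ρ g15
  have ce2f1 : ∀ u, ρ sl3E₂₃ (ρ sl3E₂₁ u) = ρ sl3E₂₁ (ρ sl3E₂₃ u) := brk_comm ρ g16
  have cf1f3 : ∀ u, ρ sl3E₂₁ (ρ sl3E₃₁ u) = ρ sl3E₃₁ (ρ sl3E₂₁ u) := brk_comm ρ g18
  have ce1e3 : ∀ u, ρ sl3E₁₂ (ρ sl3E₁₃ u) = ρ sl3E₁₃ (ρ sl3E₁₂ u) := brk_comm ρ g19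
  have ce2f3 : ∀ u, ρ sl3E₂₃ (ρ sl3E₃₁ u) = ρ sl3E₃₁ (ρ sl3E₂₃ u) + ρ sl3E₂₁ u := brk_end ρ g17
  have ce2e1 : ∀ u, ρ sl3E₂₃ (ρ sl3E₁₂ u) = ρ sl3E₁₂ (ρ sl3E₂₃ u) + (-(ρ sl3E₁₃)) u := by
    intro u
    have h := brk_end ρ g14 u
    simpa [map_neg, LinearMap.neg_apply] using h
  have cNe3e1 : ∀ u, (-(ρ sl3E₁₃)) (ρ sl3E₁₂ u) = ρ sl3E₁₂ ((-(ρ sl3E₁₃)) u) := by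
    intro u
    simp [LinearMap.neg_apply, map_neg, ce1e3]
  have hEF₃ : ∀ u, ρ sl3E₁₃ (ρ sl3E₃₁ u) = ρ sl3E₃₁ (ρ sl3E₁₃ u) + (ρ sl3H₁ + ρ sl3H₂) u := by
    intro u
    have h := brk_end ρ g7 u
    simpa [map_add, LinearMap.add_apply] using h
  have hH3E₃ : ∀ u, (ρ sl3H₁ + ρ sl3H₂) (ρ sl3E₁₃ u)
      = ρ sl3E₁₃ ((ρ sl3H₁ + ρ sl3H₂) u) + (2:ℂ) • ρ sl3E₁₃ u := by
    intro u
    simp only [LinearMap.add_apply, map_add]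
    rw [h1e3 u, h2e3 u]
    module
  have hH3F₃ : ∀ u, (ρ sl3H₁ + ρ sl3H₂) (ρ sl3E₃₁ u)
      = ρ sl3E₃₁ ((ρ sl3H₁ + ρ sl3H₂) u) + (-2:ℂ) • ρ sl3E₃₁ u := by
    intro u
    simp only [LinearMap.add_apply, map_add]
    rw [h1f3 u, h2f3 u]
    module
  set w : V := slProjFactor (ρ sl3E₃₂) (ρ sl3E₂₃) (fun k => lam₂ + k + 1) N v with hwdef
  set x : V := slProjFactor (ρ sl3E₃₁) (ρ sl3E₁₃) (fun k => lam₁ + lam₂ + k + 2) N w with hxdef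
  have hproj : sl3Projector ρ lam₁ lam₂ N v
      = slProjFactor (ρ sl3E₂₁) (ρ sl3E₁₂) (fun k => lam₁ + k + 1) N x := by
    rw [sl3Projector, hxdef, hwdef]
    simp only [Module.End.mul_apply]
  have W2 : ρ sl3H₂ w = lam₂ • w := by
    rw [hwdef]
    exact wt_proj _ _ _ 2 (-2) (by ring) hHE₂ hHF₂ _ N v lam₂ hw₂
  have W1 : ρ sl3H₁ w = lam₁ • w := by
    rw [hwdef]
    exact wt_proj _ _ _ (-1) 1 (by ring) h1e2 h1f2 _ N v lam₁ hw₁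
  have WH3 : (ρ sl3H₁ + ρ sl3H₂) w = (lam₁ + lam₂) • w := by
    simp only [LinearMap.add_apply]
    rw [W1, W2]
    module
  have Wx1 : ρ sl3H₁ x = lam₁ • x := by
    rw [hxdef]
    exact wt_proj _ _ _ 1 (-1) (by ring) h1e3 h1f3 _ N w lam₁ W1
  have k1 : ρ sl3E₂₃ w = 0 := by
    rw [hwdef]
    exact factor_kill _ _ _ hEF₂ hHE₂ hHF₂ lam₂ _ N (fun k _ => rfl)
      (fun k hk _ => hd₂ k hk) h23 v hw₂
  have hdd₃ : ∀ k : ℕ, 1 ≤ k → lam₁ + lam₂ + (k:ℂ) + 2 = (lam₁ + lam₂) + k + 1 + 1 := by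
    intro k _; ring
  have k2 : ρ sl3E₁₃ x = ∑ m ∈ Finset.range N,
      (pc (fun k => lam₁ + lam₂ + k + 2) m * 1 / (lam₁ + lam₂ + m + 2 + 1)) •
        ((ρ sl3E₃₁ ^ m) ((ρ sl3E₁₃ ^ (m+1)) w)) := by
    rw [hxdef, factor_raise _ _ _ hEF₃ hH3E₃ hH3F₃ (lam₁ + lam₂) 1 _ hdd₃ w WH3 N
      (fun k hk _ => hd₃ k hk), h13]
    simp
  have k3 : ρ sl3E₂₃ x = ∑ m ∈ Finset.range N,
      ((((m:ℂ)+1) * pc (fun k => lam₁ + lam₂ + k + 2) (m+1)) •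
        ((ρ sl3E₃₁ ^ m) (ρ sl3E₂₁ ((ρ sl3E₁₃ ^ (m+1)) w)))) := by
    rw [hxdef]
    exact pushB _ _ _ _ ce2f3 cf1f3 ce2e3 _ w k1 N
  have k4 : ρ sl3E₂₃ x = -(ρ sl3E₂₁ (ρ sl3E₁₃ x)) := by
    rw [k3, k2, map_sum, ← Finset.sum_neg_distrib]
    refine Finset.sum_congr rfl fun m _ => ?_
    rw [map_smul, comm_pow (ρ sl3E₂₁) (ρ sl3E₃₁) cf1f3 m, ← neg_smul]
    congr 1
    have hdm : lam₁ + lam₂ + ((m : ℕ) + 1 : ℕ) + 2 ≠ 0 := hd₃ (m+1) (by omega)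
    have hc := pc_succ (fun k => lam₁ + lam₂ + k + 2) m hdm
    have hne : lam₁ + lam₂ + (m:ℂ) + 2 + 1 ≠ 0 := by
      intro h
      apply hdm
      push_cast
      linear_combination h
    push_cast at hc
    field_simp
    linear_combination hc
  have Wy : ρ sl3H₁ (ρ sl3E₁₃ x) = (lam₁ + 1) • ρ sl3E₁₃ x := by
    rw [h1e3 x, Wx1, map_smul]
    module
  have hNy : (ρ sl3E₁₂ ^ N) (ρ sl3E₁₃ x) = 0 := by
    have hp := push_pow (ρ sl3E₂₃) (ρ sl3E₁₂) (-(ρ sl3E₁₃)) ce2e1 cNe3e1 N x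
    rw [h12] at hp
    simp only [LinearMap.zero_apply, map_zero, zero_add] at hp
    have h0 := (smul_eq_zero.mp hp.symm).resolve_left hN1
    simpa [LinearMap.neg_apply, map_neg, neg_eq_zero] using h0
  have main1 : ρ sl3E₁₂ (slProjFactor (ρ sl3E₂₁) (ρ sl3E₁₂) (fun k => lam₁ + k + 1) N x) = 0 :=
    factor_kill _ _ _ hEF₁ hHE₁ hHF₁ lam₁ _ N (fun k _ => rfl)
      (fun k hk _ => hd₁ k hk) h12 x Wx1
  have main2 : ρ sl3E₂₃ (slProjFactor (ρ sl3E₂₁) (ρ sl3E₁₂) (fun k => lam₁ + k + 1) N x) = 0 := by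
    rw [pushA (ρ sl3E₂₃) (ρ sl3E₁₂) (ρ sl3E₂₁) (-(ρ sl3E₁₃)) ce2e1 cNe3e1 ce2f1 _ x N]
    have ht := tail_cancel (ρ sl3E₁₂) (ρ sl3E₂₁) (ρ sl3H₁) hEF₁ hHE₁ lam₁ _ (fun k _ => rfl)
      (ρ sl3E₁₃ x) Wy N (fun k hk _ => hd₁ k hk)
    have hs1 : ∀ n : ℕ, (ρ sl3E₂₁ ^ n) ((ρ sl3E₁₂ ^ n) (ρ sl3E₂₃ x))
        = -((ρ sl3E₂₁ ^ n) ((ρ sl3E₁₂ ^ n) (ρ sl3E₂₁ (ρ sl3E₁₃ x)))) := by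
      intro n
      rw [k4]
      simp [map_neg]
    have hs2 : ∀ m : ℕ, (ρ sl3E₂₁ ^ (m+1)) ((ρ sl3E₁₂ ^ m) ((-(ρ sl3E₁₃)) x))
        = -((ρ sl3E₂₁ ^ (m+1)) ((ρ sl3E₁₂ ^ m) (ρ sl3E₁₃ x))) := by
      intro m
      simp [LinearMap.neg_apply, map_neg]
    simp only [hs1, hs2, smul_neg, Finset.sum_neg_distrib, ← neg_add]
    rw [ht]
    simp [hNy]
  refine ⟨?_, ?_, ?_⟩
  · rw [hproj]
    exact main1
  · rw [hproj]
    exact main2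
  · have e3pt : ∀ u : V, ρ sl3E₁₃ u = ρ sl3E₁₂ (ρ sl3E₂₃ u) - ρ sl3E₂₃ (ρ sl3E₁₂ u) := by
      intro u
      have h := brk_end ρ g20 u
      rw [h]
      abel
    rw [hproj, e3pt, main2, main1]
    simp
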